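/- arXiv:2101.04940 — 6 statements merged into one kernel-verified Lean document; each statement's English description precedes it below -/
import Mathlib

section
/- Let E be a finite-dimensional real inner product space and let S and Sᶜ be linear subspaces of E with S ∩ Sᶜ = {0} and S + Sᶜ = E (a direct-sum decomposition that is not assumed orthogonal). Let π_S and π_{Sᶜ} be the orthogonal projections of E onto S and onto Sᶜ. Then the operator norms of the compositions satisfy ‖π_S ∘ π_{Sᶜ}‖ < 1 and ‖π_{Sᶜ} ∘ π_S‖ < 1. -/
open scoped RealInnerProductSpace

private lemma mem_of_norm_proj_eq
    {E : Type*} [NormedAddCommGroup E] [InnerProductSpace ℝ E] [FiniteDimensional ℝ E]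
    (K : Submodule ℝ E) {v : E}
    (h : ‖(Submodule.orthogonalProjectionOnto K v : E)‖ = ‖v‖) : v ∈ K := by
  have hsq := Submodule.orthogonalProjectionFn_norm_sq K v
  rw [Submodule.orthogonalProjectionFn_eq, h] at hsq
  have h0 : ‖v - (Submodule.orthogonalProjectionOnto K v : E)‖ = 0 := by nlinarith [norm_nonneg (v - (Submodule.orthogonalProjectionOnto K v : E))]
  have : (Submodule.orthogonalProjectionOnto K v : E) = v := by
    have := norm_eq_zero.mp h0
    linear_combination (norm := abel) -this
  exact Submodule.starProjection_eq_self_iff.mp this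

private lemma norm_proj_le
    {E : Type*} [NormedAddCommGroup E] [InnerProductSpace ℝ E] [FiniteDimensional ℝ E]
    (K : Submodule ℝ E) (v : E) : ‖(Submodule.orthogonalProjectionOnto K v : E)‖ ≤ ‖v‖ := by
  have h1 : ‖Submodule.orthogonalProjectionOnto K v‖ ≤ ‖Submodule.orthogonalProjectionOnto K‖ * ‖v‖ :=
    (Submodule.orthogonalProjectionOnto K).le_opNorm v
  have h2 := Submodule.orthogonalProjectionOnto_norm_le K
  have : ‖(Submodule.orthogonalProjectionOnto K v : E)‖ = ‖Submodule.orthogonalProjectionOnto K v‖ := rfl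
  nlinarith [norm_nonneg v]

private lemma key_lemma
    {E : Type*} [NormedAddCommGroup E] [InnerProductSpace ℝ E] [FiniteDimensional ℝ E]
    (S Sc : Submodule ℝ E) (hinf : S ⊓ Sc = ⊥) :
    ‖(S.subtypeL ∘L Submodule.orthogonalProjectionOnto S) ∘L (Sc.subtypeL ∘L Submodule.orthogonalProjectionOnto Sc)‖ < 1 := by
  set T := (S.subtypeL ∘L Submodule.orthogonalProjectionOnto S) ∘L (Sc.subtypeL ∘L Submodule.orthogonalProjectionOnto Sc) with hT
  have hTapp : ∀ x : E, T x = (Submodule.orthogonalProjectionOnto S ((Submodule.orthogonalProjectionOnto Sc x : E)) : E) :=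
    fun x => rfl
  have hTle : ∀ x : E, ‖T x‖ ≤ ‖x‖ := fun x => by
    rw [hTapp]
    exact le_trans (norm_proj_le S _) (norm_proj_le Sc x)
  have hTnorm : ‖T‖ ≤ 1 := T.opNorm_le_bound zero_le_one (fun x => by simpa using hTle x)
  rcases subsingleton_or_nontrivial E with hE | hE
  · have : T = 0 := by ext x; exact Subsingleton.elim _ _
    rw [this]; simp
  · by_contra hcon
    have hTeq : ‖T‖ = 1 := le_antisymm hTnorm (not_lt.mp hcon)
    -- attain the norm on the sphere
    obtain ⟨x₀, hx₀s, hx₀max⟩ := (isCompact_sphere (0 : E) 1).exists_isMaxOn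
      (NormedSpace.sphere_nonempty.mpr zero_le_one)
      (continuous_norm.comp T.continuous).continuousOn
    have hx₀ : ‖x₀‖ = 1 := by simpa using hx₀s
    have hTx₀ : ‖T x₀‖ = 1 := by
      have hle : ‖T x₀‖ ≤ 1 := by simpa [hx₀] using hTle x₀
      have hge : ‖T‖ ≤ ‖T x₀‖ := by
        apply T.opNorm_le_bound (norm_nonneg _)
        intro y
        rcases eq_or_ne y 0 with rfl | hy
        · simp
        · have hyn : ‖y‖ ≠ 0 := norm_ne_zero_iff.mpr hy
          have hz : ‖(‖y‖⁻¹ • y)‖ = 1 := by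
            rw [norm_smul, norm_inv, norm_norm, inv_mul_cancel₀ hyn]
          have h5 : ‖T (‖y‖⁻¹ • y)‖ ≤ ‖T x₀‖ := hx₀max (by simpa [mem_sphere_iff_norm] using hz)
          rw [map_smul, norm_smul, norm_inv, norm_norm] at h5
          calc ‖T y‖ = ‖y‖ * (‖y‖⁻¹ * ‖T y‖) := by field_simp
          _ ≤ ‖y‖ * ‖T x₀‖ := by
              apply mul_le_mul_of_nonneg_left h5 (norm_nonneg y)
          _ = ‖T x₀‖ * ‖y‖ := mul_comm _ _
      linarith [hge.trans hle, hTeq ▸ hge]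
    -- equality analysis
    set u : E := (Submodule.orthogonalProjectionOnto Sc x₀ : E) with hu
    have h1 : ‖(Submodule.orthogonalProjectionOnto S u : E)‖ = 1 := by rw [← hTapp]; exact hTx₀
    have h2 : ‖u‖ ≤ 1 := by rw [hu, ← hx₀]; exact norm_proj_le Sc x₀
    have h3 : ‖u‖ = 1 := le_antisymm h2 (by
      calc (1:ℝ) = ‖(Submodule.orthogonalProjectionOnto S u : E)‖ := h1.symm
      _ ≤ ‖u‖ := norm_proj_le S u)
    have hx₀Sc : x₀ ∈ Sc := mem_of_norm_proj_eq Sc (by rw [← hu, h3, hx₀])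
    have hux₀ : u = x₀ := by
      rw [hu]; exact Submodule.starProjection_eq_self_iff.mpr hx₀Sc
    have hx₀S : x₀ ∈ S := mem_of_norm_proj_eq S (by rw [← hux₀, h1, h3])
    have : x₀ ∈ S ⊓ Sc := ⟨hx₀S, hx₀Sc⟩
    rw [hinf, Submodule.mem_bot] at this
    rw [this] at hx₀
    simp at hx₀

/-- Let `E` be a finite-dimensional real inner product space and let `S`, `Sc`
be linear subspaces of `E` with `S ⊓ Sc = ⊥` and `S ⊔ Sc = ⊤` (a direct-sum decomposition that
is not assumed orthogonal). Then the operator norms of the compositions of the orthogonal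
projections onto `S` and onto `Sc` satisfy `‖π_S ∘ π_Sc‖ < 1` and `‖π_Sc ∘ π_S‖ < 1`. -/
theorem projection_composition_norm_lt_one
    {E : Type*} [NormedAddCommGroup E] [InnerProductSpace ℝ E] [FiniteDimensional ℝ E]
    (S Sc : Submodule ℝ E) (hinf : S ⊓ Sc = ⊥) (hsup : S ⊔ Sc = ⊤) :
    ‖(S.subtypeL ∘L S.orthogonalProjectionOnto) ∘L (Sc.subtypeL ∘L Sc.orthogonalProjectionOnto)‖ < 1 ∧
    ‖(Sc.subtypeL ∘L Sc.orthogonalProjectionOnto) ∘L (S.subtypeL ∘L S.orthogonalProjectionOnto)‖ < 1 := by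
  exact ⟨key_lemma S Sc hinf, key_lemma Sc S (by rwa [inf_comm])⟩
end

section
/- Let E be a finite-dimensional real inner product space and let S and Sᶜ be linear subspaces of E with S ∩ Sᶜ = {0} and S + Sᶜ = E. Let π_S and π_{Sᶜ} be the orthogonal projections of E onto S and onto Sᶜ. Then the linear maps Id − π_S ∘ π_{Sᶜ} : E → E and Id − π_{Sᶜ} ∘ π_S : E → E are bijective (linear isomorphisms of E). -/
open scoped RealInnerProductSpace

lemma aux_bij {E : Type*} [NormedAddCommGroup E] [InnerProductSpace ℝ E] [FiniteDimensional ℝ E]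
    (S Sc : Submodule ℝ E) (hinf : S ⊓ Sc = ⊥) :
    Function.Bijective
      (fun x : E => x - (Submodule.orthogonalProjectionOnto S ((Submodule.orthogonalProjectionOnto Sc x : E)) : E)) := by
  set L : E →ₗ[ℝ] E :=
    LinearMap.id - (S.subtype.comp ((Submodule.orthogonalProjectionOnto S).toLinearMap.comp
      (Sc.subtype.comp (Submodule.orthogonalProjectionOnto Sc).toLinearMap))) with hL
  have hfun : (fun x : E => x - (Submodule.orthogonalProjectionOnto S ((Submodule.orthogonalProjectionOnto Sc x : E)) : E))
      = L := by
    funext x; simp [hL]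
  rw [hfun]
  have hinj : Function.Injective L := by
    rw [← LinearMap.ker_eq_bot, LinearMap.ker_eq_bot']
    intro x hx
    have hx' : x = (Submodule.orthogonalProjectionOnto S ((Submodule.orthogonalProjectionOnto Sc x : E)) : E) := by
      have := hx
      simp [hL, sub_eq_zero] at this
      exact this
    set y : E := (Submodule.orthogonalProjectionOnto Sc x : E) with hy
    have hxS : x ∈ S := hx' ▸ SetLike.coe_mem _
    have hyS : y ∈ Sc := SetLike.coe_mem _
    -- ⟪x, x⟫ = ⟪x, y⟫
    have h1 : ⟪x, x⟫ = ⟪x, y⟫ := by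
      have horth : y - (Submodule.orthogonalProjectionOnto S y : E) ∈ Sᗮ :=
        Submodule.sub_starProjection_mem_orthogonal y
      have := (Submodule.mem_orthogonal _ _).mp horth x hxS
      have h := this
      rw [inner_sub_right] at h
      have : ⟪x, (Submodule.orthogonalProjectionOnto S y : E)⟫ = ⟪x, y⟫ := by linarith [h]
      rw [← hx'] at this
      linarith [this]
    -- ⟪x, y⟫ = ⟪y, y⟫
    have h2 : ⟪x, y⟫ = ⟪y, y⟫ := by
      have horth : x - y ∈ Scᗮ := Submodule.sub_starProjection_mem_orthogonal x
      have h := (Submodule.mem_orthogonal _ _).mp horth y hyS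
      rw [inner_sub_right] at h
      linarith [h, real_inner_comm y x]
    have hxy : x = y := by
      have : ⟪x - y, x - y⟫ = 0 := by
        rw [inner_sub_left, inner_sub_right, inner_sub_right]
        rw [real_inner_comm y x] at *
        linarith [h1, h2]
      exact sub_eq_zero.mp (inner_self_eq_zero.mp this)
    have : x ∈ S ⊓ Sc := ⟨hxS, hxy ▸ hyS⟩
    rw [hinf] at this
    exact this
  exact ⟨hinj, (LinearMap.injective_iff_surjective).mp hinj⟩


/-- Let `E` be a finite-dimensional real inner product space and let `S`, `Sc`
be linear subspaces of `E` with `S ⊓ Sc = ⊥` and `S ⊔ Sc = ⊤`. Let `π_S`, `π_Sc` be the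
orthogonal projections of `E` onto `S` and onto `Sc`. Then the linear maps
`Id − π_S ∘ π_Sc : E → E` and `Id − π_Sc ∘ π_S : E → E` are bijective. -/
theorem id_sub_projection_composition_bijective
    {E : Type*} [NormedAddCommGroup E] [InnerProductSpace ℝ E] [FiniteDimensional ℝ E]
    (S Sc : Submodule ℝ E) (hinf : S ⊓ Sc = ⊥) (hsup : S ⊔ Sc = ⊤) :
    Function.Bijective
      (fun x : E => x - (Submodule.orthogonalProjectionOnto S ((Submodule.orthogonalProjectionOnto Sc x : E)) : E)) ∧
    Function.Bijective
      (fun x : E => x - (Submodule.orthogonalProjectionOnto Sc ((Submodule.orthogonalProjectionOnto S x : E)) : E)) := by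
  exact ⟨aux_bij S Sc hinf, aux_bij Sc S (by rwa [inf_comm] at hinf)⟩
end

section
/- Let E be a finite-dimensional real inner product space and let S and Sᶜ be linear subspaces of E with S ∩ Sᶜ = {0} and S + Sᶜ = E, with orthogonal projections π_S and π_{Sᶜ}. Let b ∈ S and c ∈ Sᶜ, and suppose u, v ∈ E satisfy u − π_S(π_{Sᶜ}(u)) = b − π_S(c) and v − π_{Sᶜ}(π_S(v)) = c − π_{Sᶜ}(b). Then π_S(u + v) = b and π_{Sᶜ}(u + v) = c. (In other words, the recovery operator R(b,c) := (Id − π_S π_{Sᶜ})⁻¹(b − π_S c) + (Id − π_{Sᶜ} π_S)⁻¹(c − π_{Sᶜ} b) satisfies π_S(R(b,c)) = b and π_{Sᶜ}(R(b,c)) = c.) -/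
open scoped RealInnerProductSpace


/-- Let `E` be a finite-dimensional real inner product space, `S`, `Sc`
subspaces with `S ⊓ Sc = ⊥`, `S ⊔ Sc = ⊤`, with orthogonal projections `π_S`, `π_Sc`.
Let `b ∈ S`, `c ∈ Sc`, and suppose `u, v ∈ E` satisfy `u − π_S (π_Sc u) = b − π_S c` and
`v − π_Sc (π_S v) = c − π_Sc b`. Then `π_S (u + v) = b` and `π_Sc (u + v) = c`.
(This is property (2.14) of the recovery operator.) -/
theorem recovery_operator_projections
    {E : Type*} [NormedAddCommGroup E] [InnerProductSpace ℝ E] [FiniteDimensional ℝ E]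
    (S Sc : Submodule ℝ E) (hinf : S ⊓ Sc = ⊥) (hsup : S ⊔ Sc = ⊤)
    (b c u v : E) (hb : b ∈ S) (hc : c ∈ Sc)
    (hu : u - (Submodule.orthogonalProjection S ((Submodule.orthogonalProjection Sc u : E)) : E)
        = b - (Submodule.orthogonalProjection S c : E))
    (hv : v - (Submodule.orthogonalProjection Sc ((Submodule.orthogonalProjection S v : E)) : E)
        = c - (Submodule.orthogonalProjection Sc b : E)) :
    (Submodule.orthogonalProjection S (u + v) : E) = b ∧ (Submodule.orthogonalProjection Sc (u + v) : E) = c := by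
  have hPid : ∀ x : E, x ∈ S → ((Submodule.orthogonalProjection S x : E)) = x :=
    fun x hx => Submodule.starProjection_eq_self_iff.2 hx
  have hQid : ∀ x : E, x ∈ Sc → ((Submodule.orthogonalProjection Sc x : E)) = x :=
    fun x hx => Submodule.starProjection_eq_self_iff.2 hx
  have hPu : (Submodule.orthogonalProjection S u : E) = u := by
    have h := congrArg (fun x : E => (Submodule.orthogonalProjection S x : E)) hu
    simp only [map_sub, Submodule.coe_sub] at h
    rw [hPid _ (Submodule.coe_mem _), hPid _ hb, hPid _ (Submodule.coe_mem _)] at h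
    have h2 := h.trans hu.symm
    exact sub_left_inj.mp h2
  have hQv : (Submodule.orthogonalProjection Sc v : E) = v := by
    have h := congrArg (fun x : E => (Submodule.orthogonalProjection Sc x : E)) hv
    simp only [map_sub, Submodule.coe_sub] at h
    rw [hQid _ (Submodule.coe_mem _), hQid _ hc, hQid _ (Submodule.coe_mem _)] at h
    exact sub_left_inj.mp (h.trans hv.symm)
  have huS : u ∈ S := Submodule.starProjection_eq_self_iff.1 hPu
  have hvSc : v ∈ Sc := Submodule.starProjection_eq_self_iff.1 hQv
  set p : E := u + (Submodule.orthogonalProjection S v : E) - b with hpdef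
  set q : E := (Submodule.orthogonalProjection Sc u : E) + v - c with hqdef
  have hpS : p ∈ S := S.sub_mem (S.add_mem huS (Submodule.coe_mem _)) hb
  have hp : p = (Submodule.orthogonalProjection S q : E) := by
    rw [hqdef, hpdef]
    simp only [map_sub, map_add, Submodule.coe_sub, Submodule.coe_add]
    linear_combination (norm := module) hu
  have hq : q = (Submodule.orthogonalProjection Sc p : E) := by
    rw [hqdef, hpdef]
    simp only [map_sub, map_add, Submodule.coe_sub, Submodule.coe_add]
    linear_combination (norm := module) hv
  clear_value p q
  have key : p = (Submodule.orthogonalProjection S ((Submodule.orthogonalProjection Sc p : E)) : E) := by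
    rw [hq] at hp; exact hp
  have h1 : ⟪p, p⟫ = ⟪((Submodule.orthogonalProjection Sc p : E)), p⟫ := by
    nth_rewrite 1 [key]
    rw [← Submodule.starProjection_apply, Submodule.inner_starProjection_left_eq_right,
      Submodule.starProjection_apply, hPid _ hpS]
  have h2 : ⟪p, ((Submodule.orthogonalProjection Sc p : E))⟫
      = ⟪((Submodule.orthogonalProjection Sc p : E)), ((Submodule.orthogonalProjection Sc p : E))⟫ := by
    have h0 := Submodule.starProjection_inner_eq_zero (K := Sc) p ((Submodule.orthogonalProjection Sc p : E))
      (Submodule.coe_mem _)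
    rw [inner_sub_left, Submodule.starProjection_apply] at h0
    linarith [h0]
  have hpq0 : p - (Submodule.orthogonalProjection Sc p : E) = 0 := by
    have h0 : ⟪p - (Submodule.orthogonalProjection Sc p : E), p - (Submodule.orthogonalProjection Sc p : E)⟫ = 0 := by
      simp only [inner_sub_left, inner_sub_right]
      linarith [h1, h2, real_inner_comm p ((Submodule.orthogonalProjection Sc p : E))]
    exact inner_self_eq_zero.1 h0
  have hpSc : p ∈ Sc := by
    have heq : p = (Submodule.orthogonalProjection Sc p : E) := by
      linear_combination (norm := module) hpq0
    rw [heq]; exact Submodule.coe_mem _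
  have hp0 : p = 0 := by
    have hm : p ∈ S ⊓ Sc := ⟨hpS, hpSc⟩
    rwa [hinf, Submodule.mem_bot] at hm
  have hq0 : q = 0 := by rw [hq, hp0]; simp
  rw [hpdef] at hp0
  rw [hqdef] at hq0
  constructor
  · have h3 : (Submodule.orthogonalProjection S (u + v) : E) = u + (Submodule.orthogonalProjection S v : E) := by
      simp [map_add, hPu]
    rw [h3]
    linear_combination (norm := module) hp0
  · have h3 : (Submodule.orthogonalProjection Sc (u + v) : E) = (Submodule.orthogonalProjection Sc u : E) + v := by
      simp [map_add, hQv]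
    rw [h3]
    linear_combination (norm := module) hq0
end

section
/- Let E be a finite-dimensional real inner product space and let S and Sᶜ be linear subspaces of E with S ∩ Sᶜ = {0} and S + Sᶜ = E, with orthogonal projections π_S and π_{Sᶜ}. Let α ∈ [0,1) be such that the operator norms satisfy ‖π_S ∘ π_{Sᶜ}‖ ≤ α and ‖π_{Sᶜ} ∘ π_S‖ ≤ α. Then for every a ∈ E one has the two-sided norm equivalence ‖π_S(a)‖ + ‖π_{Sᶜ}(a)‖ ≤ 2‖a‖ and ‖a‖ ≤ (2/(1−α)) (‖π_S(a)‖ + ‖π_{Sᶜ}(a)‖). -/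
/-- Let `E` be a finite-dimensional real inner product space, `S`, `Sc`
subspaces with `S ⊓ Sc = ⊥` and `S ⊔ Sc = ⊤`, with orthogonal projections `π_S`, `π_Sc`.
Let `α ∈ [0,1)` be such that `‖π_S ∘ π_Sc‖ ≤ α` and `‖π_Sc ∘ π_S‖ ≤ α` (operator norms).
Then for every `a ∈ E` one has `‖π_S a‖ + ‖π_Sc a‖ ≤ 2 ‖a‖` and
`‖a‖ ≤ (2/(1−α)) (‖π_S a‖ + ‖π_Sc a‖)`. -/
theorem norm_equivalence_projections
    {E : Type*} [NormedAddCommGroup E] [InnerProductSpace ℝ E] [FiniteDimensional ℝ E]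
    (S Sc : Submodule ℝ E) (hinf : S ⊓ Sc = ⊥) (hsup : S ⊔ Sc = ⊤)
    (α : ℝ) (hα0 : 0 ≤ α) (hα1 : α < 1)
    (hSSc : ‖(S.subtypeL ∘L S.orthogonalProjectionOnto) ∘L
        (Sc.subtypeL ∘L Sc.orthogonalProjectionOnto)‖ ≤ α)
    (hScS : ‖(Sc.subtypeL ∘L Sc.orthogonalProjectionOnto) ∘L
        (S.subtypeL ∘L S.orthogonalProjectionOnto)‖ ≤ α) :
    ∀ a : E,
      ‖(S.orthogonalProjectionOnto a : E)‖ + ‖(Sc.orthogonalProjectionOnto a : E)‖ ≤ 2 * ‖a‖ ∧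
      ‖a‖ ≤ (2 / (1 - α)) *
        (‖(S.orthogonalProjectionOnto a : E)‖ + ‖(Sc.orthogonalProjectionOnto a : E)‖) := by
  intro a
  have hα1' : (0:ℝ) < 1 - α := by linarith
  have hb1 : ‖(S.orthogonalProjectionOnto a : E)‖ ≤ ‖a‖ :=
    ((S.orthogonalProjectionOnto).le_opNorm a).trans (by
        nlinarith [Submodule.orthogonalProjectionOnto_norm_le S, norm_nonneg a])
  have hb2 : ‖(Sc.orthogonalProjectionOnto a : E)‖ ≤ ‖a‖ :=
    ((Sc.orthogonalProjectionOnto).le_opNorm a).trans (by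
        nlinarith [Submodule.orthogonalProjectionOnto_norm_le Sc, norm_nonneg a])
  refine ⟨by linarith, ?_⟩
  -- decompose a = s + c
  have ha : a ∈ S ⊔ Sc := hsup ▸ Submodule.mem_top
  obtain ⟨s, hs, c, hc, rfl⟩ := Submodule.mem_sup.mp ha
  have hps : (S.orthogonalProjectionOnto s : E) = s := Submodule.starProjection_eq_self_iff.mpr hs
  have hpc : (Sc.orthogonalProjectionOnto c : E) = c := Submodule.starProjection_eq_self_iff.mpr hc
  have key1 : ‖(S.orthogonalProjectionOnto c : E)‖ ≤ α * ‖c‖ := by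
    have h := ((S.subtypeL ∘L S.orthogonalProjectionOnto) ∘L
        (Sc.subtypeL ∘L Sc.orthogonalProjectionOnto)).le_opNorm c
    simp only [ContinuousLinearMap.comp_apply, Submodule.subtypeL_apply] at h
    rw [hpc] at h
    exact h.trans (by nlinarith [norm_nonneg c])
  have key2 : ‖(Sc.orthogonalProjectionOnto s : E)‖ ≤ α * ‖s‖ := by
    have h := ((Sc.subtypeL ∘L Sc.orthogonalProjectionOnto) ∘L
        (S.subtypeL ∘L S.orthogonalProjectionOnto)).le_opNorm s
    simp only [ContinuousLinearMap.comp_apply, Submodule.subtypeL_apply] at h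
    rw [hps] at h
    exact h.trans (by nlinarith [norm_nonneg s])
  have e1 : (S.orthogonalProjectionOnto (s + c) : E) = s + (S.orthogonalProjectionOnto c : E) := by
    rw [map_add]
    push_cast
    rw [hps]
  have e2 : (Sc.orthogonalProjectionOnto (s + c) : E) = (Sc.orthogonalProjectionOnto s : E) + c := by
    rw [map_add]
    push_cast
    rw [hpc]
  have l1 : ‖s‖ - α * ‖c‖ ≤ ‖(S.orthogonalProjectionOnto (s + c) : E)‖ := by
    rw [e1]
    have := norm_sub_le (s + (S.orthogonalProjectionOnto c : E)) (S.orthogonalProjectionOnto c : E)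
    simp only [add_sub_cancel_right] at this
    linarith
  have l2 : ‖c‖ - α * ‖s‖ ≤ ‖(Sc.orthogonalProjectionOnto (s + c) : E)‖ := by
    rw [e2]
    have := norm_sub_le ((Sc.orthogonalProjectionOnto s : E) + c) (Sc.orthogonalProjectionOnto s : E)
    simp only [add_sub_cancel_left] at this
    linarith
  have hnorm : ‖s + c‖ ≤ ‖s‖ + ‖c‖ := norm_add_le s c
  rw [div_mul_eq_mul_div, le_div_iff₀ hα1']
  nlinarith [norm_nonneg s, norm_nonneg c,
    norm_nonneg ((S.orthogonalProjectionOnto (s + c) : E)),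
    norm_nonneg ((Sc.orthogonalProjectionOnto (s + c) : E))]
end

section
/- For every integer ℓ ≥ 1 and every real ρ with 0 < ρ < 1 there exists a real C > 0, depending only on ℓ and ρ, with the following property: for every Lebesgue-measurable set T ⊆ ℝ³ with B(0,ρ) ⊆ T ⊆ B(0,1) and every polynomial vector field u : ℝ³ → ℝ³ whose components have total degree at most ℓ, there exists a polynomial vector field z : ℝ³ → ℝ³ whose components have total degree at most ℓ−1 such that curl(x ↦ x × z(x)) = curl u as functions on ℝ³, and ∫_T ‖x × z(x)‖² dx ≤ C² ∫_T ‖curl u(x)‖² dx. (This is the normalized form of the estimate ‖(curl)⁻¹‖ ≲ h_T for the isomorphism curl : x × (P^{ℓ−1})³ → curl (P^{ℓ})³ on a polyhedron T of diameter h_T containing a ball of radius ρ h_T.) -/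
set_option maxHeartbeats 1000000
set_option synthInstance.maxHeartbeats 400000


open MvPolynomial MeasureTheory

/-- The curl of a polynomial vector field on `ℝ³`, as a polynomial vector field. -/
noncomputable def polyCurl (w : Fin 3 → MvPolynomial (Fin 3) ℝ) :
    Fin 3 → MvPolynomial (Fin 3) ℝ :=
  ![pderiv 1 (w 2) - pderiv 2 (w 1),
    pderiv 2 (w 0) - pderiv 0 (w 2),
    pderiv 0 (w 1) - pderiv 1 (w 0)]

/-- The polynomial vector field `x ↦ x × z(x)` (Koszul cross field). -/
noncomputable def koszulCross (z : Fin 3 → MvPolynomial (Fin 3) ℝ) :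
    Fin 3 → MvPolynomial (Fin 3) ℝ :=
  ![X 1 * z 2 - X 2 * z 1, X 2 * z 0 - X 0 * z 2, X 0 * z 1 - X 1 * z 0]

/-- Evaluation of a polynomial vector field at a point of `ℝ³`. -/
noncomputable def polyVecEval (p : Fin 3 → MvPolynomial (Fin 3) ℝ)
    (x : EuclideanSpace ℝ (Fin 3)) : EuclideanSpace ℝ (Fin 3) :=
  (WithLp.equiv 2 (Fin 3 → ℝ)).symm fun i => eval (fun j => x j) (p i)



private lemma degree_fin3 (d : Fin 3 →₀ ℕ) : d.degree = d 0 + d 1 + d 2 := by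
  rw [Finsupp.degree_apply, Finset.sum_subset (Finset.subset_univ d.support)
    (fun x _ hx => Finsupp.notMem_support_iff.mp hx), Fin.sum_univ_three]

private lemma X_mul_pderiv_monomial (i : Fin 3) (d : Fin 3 →₀ ℕ) (c : ℝ) :
    X i * pderiv i (monomial d c) = (d i : ℝ) • monomial d c := by
  rw [pderiv_monomial]
  rcases Nat.eq_zero_or_pos (d i) with h0 | h0
  · simp [h0]
  · have hd : Finsupp.single i 1 + (d - Finsupp.single i 1) = d := by
      ext j
      rcases eq_or_ne j i with rfl | hj
      · simp only [Finsupp.add_apply, Finsupp.tsub_apply, Finsupp.single_eq_same]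
        omega
      · simp [Finsupp.add_apply, Finsupp.tsub_apply, Finsupp.single_eq_of_ne' (Ne.symm hj)]
    rw [X, monomial_mul, hd, smul_monomial, one_mul, smul_eq_mul, mul_comm]

private lemma euler3 {k : ℕ} {p : MvPolynomial (Fin 3) ℝ} (hp : p.IsHomogeneous k) :
    X 0 * pderiv 0 p + X 1 * pderiv 1 p + X 2 * pderiv 2 p = C (k : ℝ) * p := by
  conv_lhs => rw [p.as_sum]
  conv_rhs => rw [p.as_sum]
  rw [map_sum, map_sum, map_sum, Finset.mul_sum, Finset.mul_sum, Finset.mul_sum, Finset.mul_sum,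
    ← Finset.sum_add_distrib, ← Finset.sum_add_distrib]
  refine Finset.sum_congr rfl fun d hd => ?_
  have hdeg : d.degree = k := by
    by_contra h
    exact mem_support_iff.mp hd (hp.coeff_eq_zero h)
  rw [X_mul_pderiv_monomial, X_mul_pderiv_monomial, X_mul_pderiv_monomial,
    ← add_smul, ← add_smul, C_mul_monomial, smul_monomial]
  congr 1
  rw [← hdeg, degree_fin3]
  push_cast [smul_eq_mul]
  ring

private lemma degree_tsub_single {d : Fin 3 →₀ ℕ} {i : Fin 3} (h : d i ≠ 0) :
    (d - Finsupp.single i 1).degree = d.degree - 1 ∧ 1 ≤ d.degree := by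
  rw [degree_fin3, degree_fin3, Finsupp.tsub_apply, Finsupp.tsub_apply, Finsupp.tsub_apply]
  have h0 : i = 0 ∨ i = 1 ∨ i = 2 := by omega
  rcases h0 with rfl | rfl | rfl <;>
    simp only [Finsupp.single_apply, if_pos rfl, if_neg (by decide : ¬((0:Fin 3) = 1)),
      if_neg (by decide : ¬((0:Fin 3) = 2)), if_neg (by decide : ¬((1:Fin 3) = 0)),
      if_neg (by decide : ¬((1:Fin 3) = 2)), if_neg (by decide : ¬((2:Fin 3) = 0)),
      if_neg (by decide : ¬((2:Fin 3) = 1)), if_true] <;>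
    omega

private lemma hc_monomial (n : ℕ) (d : Fin 3 →₀ ℕ) (c : ℝ) :
    homogeneousComponent n (monomial d c) =
      if d.degree = n then monomial d c else 0 := by
  ext e
  rw [coeff_homogeneousComponent]
  rcases eq_or_ne d.degree n with h | h
  · simp only [h, if_true]
    rcases eq_or_ne e.degree n with h2 | h2
    · simp [h2]
    · rw [if_neg h2, coeff_monomial, if_neg]
      rintro rfl; exact h2 h
  · rw [if_neg h, coeff_zero]
    rcases eq_or_ne e.degree n with h2 | h2
    · rw [if_pos h2, coeff_monomial, if_neg]
      rintro rfl; exact h h2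
    · rw [if_neg h2]

private lemma pderiv_hc (i : Fin 3) (k : ℕ) (p : MvPolynomial (Fin 3) ℝ) :
    pderiv i (homogeneousComponent (k+1) p) = homogeneousComponent k (pderiv i p) := by
  induction p using MvPolynomial.induction_on' with
  | add p q hp hq => simp [map_add, hp, hq]
  | monomial d c =>
    rw [hc_monomial, pderiv_monomial, hc_monomial]
    rcases Nat.eq_zero_or_pos (d i) with h0 | h0
    · split_ifs <;> simp [pderiv_monomial, h0]
    · obtain ⟨hdeg, hge⟩ := degree_tsub_single (by omega : d i ≠ 0)
      rcases eq_or_ne d.degree (k+1) with h | h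
      · rw [if_pos h, if_pos (by omega), pderiv_monomial]
      · rw [if_neg h, if_neg (by omega), map_zero]

private lemma totalDegree_pderiv_le (j : Fin 3) (q : MvPolynomial (Fin 3) ℝ) {m : ℕ}
    (h : q.totalDegree ≤ m + 1) : (pderiv j q).totalDegree ≤ m := by
  conv_lhs => rw [q.as_sum]
  rw [map_sum]
  refine totalDegree_finsetSum_le fun d hd => ?_
  rw [pderiv_monomial]
  rcases Nat.eq_zero_or_pos (d j) with h0 | h0
  · simp [h0]
  · refine le_trans (totalDegree_monomial_le _ _) ?_
    obtain ⟨hdeg, hge⟩ := degree_tsub_single (by omega : d j ≠ 0)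
    have hle : d.degree ≤ m + 1 := by
      rw [Finsupp.degree]
      exact le_trans (le_totalDegree hd) h
    have h2 : ((d - Finsupp.single j 1).sum fun _ => (id : ℕ → ℕ)) = (d - Finsupp.single j 1).degree := rfl
    rw [h2]
    omega
private lemma pderiv_comm3 (i j : Fin 3) (p : MvPolynomial (Fin 3) ℝ) :
    pderiv i (pderiv j p) = pderiv j (pderiv i p) := by
  induction p using MvPolynomial.induction_on' with
  | add p q hp hq => simp [map_add, hp, hq]
  | monomial d c =>
    rcases eq_or_ne i j with rfl | hij
    · rfl
    · simp only [pderiv_monomial]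
      rw [Finsupp.tsub_apply, Finsupp.tsub_apply,
        Finsupp.single_eq_of_ne' hij, Finsupp.single_eq_of_ne' (Ne.symm hij),
        tsub_zero, tsub_zero, tsub_right_comm]
      ring_nf

private noncomputable def polyDiv (w : Fin 3 → MvPolynomial (Fin 3) ℝ) : MvPolynomial (Fin 3) ℝ :=
  pderiv 0 (w 0) + pderiv 1 (w 1) + pderiv 2 (w 2)

private lemma polyDiv_polyCurl (u : Fin 3 → MvPolynomial (Fin 3) ℝ) :
    polyDiv (polyCurl u) = 0 := by
  simp only [polyDiv, polyCurl, Matrix.cons_val_zero, Matrix.cons_val_one, Matrix.head_cons,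
    Matrix.cons_val_two, Matrix.tail_cons, map_sub]
  rw [pderiv_comm3 1 0 (u 2), pderiv_comm3 2 0 (u 1), pderiv_comm3 2 1 (u 0)]
  ring

private lemma curl_koszul {w : Fin 3 → MvPolynomial (Fin 3) ℝ} {k : ℕ}
    (hw : ∀ i, (w i).IsHomogeneous k) (hdiv : polyDiv w = 0) (i : Fin 3) :
    polyCurl (koszulCross w) i = C (-((k:ℝ)+2)) * w i := by
  have e0 := euler3 (hw 0); have e1 := euler3 (hw 1); have e2 := euler3 (hw 2)
  have hd : pderiv 0 (w 0) + pderiv 1 (w 1) + pderiv 2 (w 2) = 0 := hdiv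
  have hC : (C (-((k:ℝ)+2)) : MvPolynomial (Fin 3) ℝ) = -(C (k:ℝ)) - 2 := by
    rw [map_neg, map_add, map_ofNat]
    ring
  rw [hC]
  have hi : i = 0 ∨ i = 1 ∨ i = 2 := by omega
  rcases hi with rfl | rfl | rfl <;>
  · simp only [polyCurl, koszulCross, Matrix.cons_val_zero, Matrix.cons_val_one, Matrix.head_cons,
      Matrix.cons_val_two, Matrix.tail_cons, map_sub, pderiv_mul, pderiv_X_self,
      pderiv_X_of_ne (by decide : (0:Fin 3) ≠ 1), pderiv_X_of_ne (by decide : (1:Fin 3) ≠ 0),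
      pderiv_X_of_ne (by decide : (0:Fin 3) ≠ 2), pderiv_X_of_ne (by decide : (2:Fin 3) ≠ 0),
      pderiv_X_of_ne (by decide : (1:Fin 3) ≠ 2), pderiv_X_of_ne (by decide : (2:Fin 3) ≠ 1)]
    first
    | linear_combination X 0 * hd - e0
    | linear_combination X 1 * hd - e1
    | linear_combination X 2 * hd - e2
private noncomputable def zVec (ℓ : ℕ) (v : Fin 3 → MvPolynomial (Fin 3) ℝ) :
    Fin 3 → MvPolynomial (Fin 3) ℝ :=
  fun i => ∑ k ∈ Finset.range ℓ, (-(1/((k:ℝ)+2))) • homogeneousComponent k (v i)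

private lemma zVec_totalDegree (ℓ : ℕ) (hℓ : 1 ≤ ℓ) (v : Fin 3 → MvPolynomial (Fin 3) ℝ)
    (i : Fin 3) : (zVec ℓ v i).totalDegree ≤ ℓ - 1 := by
  refine totalDegree_finsetSum_le fun k hk => ?_
  refine le_trans (totalDegree_smul_le _ _) ?_
  refine le_trans ((homogeneousComponent_isHomogeneous k (v i)).totalDegree_le) ?_
  have := Finset.mem_range.mp hk
  omega

private lemma sum_hc_of_lt {p : MvPolynomial (Fin 3) ℝ} {n : ℕ} (h : p.totalDegree < n) :
    ∑ k ∈ Finset.range n, homogeneousComponent k p = p := by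
  conv_rhs => rw [← sum_homogeneousComponent p]
  symm
  refine Finset.sum_subset (Finset.range_subset_range.mpr (by omega : p.totalDegree + 1 ≤ n))
    fun k _ hk => ?_
  have hk' : ¬ (k < p.totalDegree + 1) := by simpa using hk
  exact homogeneousComponent_eq_zero k p (by omega)

private lemma koszulCross_sum (s : Finset ℕ) (f : ℕ → Fin 3 → MvPolynomial (Fin 3) ℝ)
    (i : Fin 3) :
    koszulCross (fun m => ∑ k ∈ s, f k m) i = ∑ k ∈ s, koszulCross (f k) i := by
  have hi : i = 0 ∨ i = 1 ∨ i = 2 := by omega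
  rcases hi with rfl | rfl | rfl <;>
    simp [koszulCross, Finset.mul_sum, Finset.sum_sub_distrib]

private lemma polyCurl_sum (s : Finset ℕ) (f : ℕ → Fin 3 → MvPolynomial (Fin 3) ℝ)
    (i : Fin 3) :
    polyCurl (fun m => ∑ k ∈ s, f k m) i = ∑ k ∈ s, polyCurl (f k) i := by
  have hi : i = 0 ∨ i = 1 ∨ i = 2 := by omega
  rcases hi with rfl | rfl | rfl <;>
    simp [polyCurl, map_sum, Finset.sum_sub_distrib]

private lemma totalDegree_sub_le3 (a b : MvPolynomial (Fin 3) ℝ) {m : ℕ}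
    (ha : a.totalDegree ≤ m) (hb : b.totalDegree ≤ m) : (a - b).totalDegree ≤ m := by
  rw [sub_eq_add_neg]
  refine le_trans (totalDegree_add _ _) (max_le ha ?_)
  rw [show -b = (-1 : ℝ) • b by rw [neg_one_smul]]
  exact le_trans (totalDegree_smul_le _ _) hb

private lemma polyCurl_totalDegree (ℓ : ℕ) (hℓ : 1 ≤ ℓ) (u : Fin 3 → MvPolynomial (Fin 3) ℝ)
    (hu : ∀ i, (u i).totalDegree ≤ ℓ) (j : Fin 3) :
    (polyCurl u j).totalDegree ≤ ℓ - 1 := by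
  have hp : ∀ (a : Fin 3) (b : Fin 3), (pderiv a (u b)).totalDegree ≤ ℓ - 1 := fun a b =>
    totalDegree_pderiv_le a (u b) (by have := hu b; omega)
  have hj : j = 0 ∨ j = 1 ∨ j = 2 := by omega
  rcases hj with rfl | rfl | rfl <;>
    simp only [polyCurl, Matrix.cons_val_zero, Matrix.cons_val_one, Matrix.head_cons,
      Matrix.cons_val_two, Matrix.tail_cons] <;>
    exact totalDegree_sub_le3 _ _ (hp _ _) (hp _ _)

private lemma zVec_curl (ℓ : ℕ) (hℓ : 1 ≤ ℓ) (u : Fin 3 → MvPolynomial (Fin 3) ℝ)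
    (hu : ∀ i, (u i).totalDegree ≤ ℓ) (i : Fin 3) :
    polyCurl (koszulCross (zVec ℓ (polyCurl u))) i = polyCurl u i := by
  set v := polyCurl u with hv
  have hdiv : polyDiv v = 0 := polyDiv_polyCurl u
  have hterm : ∀ k : ℕ, polyCurl (koszulCross
      (fun m => (-(1/((k:ℝ)+2))) • homogeneousComponent k (v m))) i
      = homogeneousComponent k (v i) := by
    intro k
    have hk2 : ((k:ℝ)+2) ≠ 0 := by positivity
    have hw : ∀ m, ((-(1/((k:ℝ)+2))) • homogeneousComponent k (v m)).IsHomogeneous k := by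
      intro m
      rw [smul_eq_C_mul]
      exact (homogeneousComponent_isHomogeneous k (v m)).C_mul _
    have hdivk : polyDiv (fun m => (-(1/((k:ℝ)+2))) • homogeneousComponent k (v m)) = 0 := by
      show pderiv 0 (_ • homogeneousComponent k (v 0)) + pderiv 1 (_ • homogeneousComponent k (v 1))
        + pderiv 2 (_ • homogeneousComponent k (v 2)) = 0
      rw [smul_eq_C_mul, smul_eq_C_mul, smul_eq_C_mul, pderiv_C_mul, pderiv_C_mul, pderiv_C_mul,
        ← mul_add, ← mul_add]
      rcases k with _ | k
      · simp [homogeneousComponent_zero, pderiv_C]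
      · rw [pderiv_hc, pderiv_hc, pderiv_hc, ← map_add, ← map_add]
        have hz : pderiv 0 (v 0) + pderiv 1 (v 1) + pderiv 2 (v 2) = 0 := hdiv
        rw [hz, map_zero, mul_zero]
    rw [curl_koszul hw hdivk i, smul_eq_C_mul, ← mul_assoc, ← map_mul]
    have hone : -((k:ℝ)+2) * -(1/((k:ℝ)+2)) = 1 := by field_simp
    rw [hone, map_one, one_mul]
  have h1 : koszulCross (zVec ℓ v) = fun m => ∑ k ∈ Finset.range ℓ,
      koszulCross (fun m' => (-(1/((k:ℝ)+2))) • homogeneousComponent k (v m')) m := by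
    funext m
    exact koszulCross_sum (Finset.range ℓ) _ m
  rw [h1, polyCurl_sum]
  rw [Finset.sum_congr rfl fun k _ => hterm k]
  exact sum_hc_of_lt (by rw [hv]; have := polyCurl_totalDegree ℓ hℓ u hu i; omega)
private noncomputable def evalVL (x : EuclideanSpace ℝ (Fin 3)) :
    (Fin 3 → MvPolynomial (Fin 3) ℝ) →ₗ[ℝ] EuclideanSpace ℝ (Fin 3) where
  toFun p := polyVecEval p x
  map_add' p q := by
    ext i
    simp [polyVecEval, WithLp.equiv_symm_apply, PiLp.add_apply, Pi.add_apply, eval_add]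
  map_smul' c p := by
    ext i
    simp [polyVecEval, WithLp.equiv_symm_apply, PiLp.smul_apply, Pi.smul_apply, smul_eval]

@[simp] private lemma evalVL_apply (x : EuclideanSpace ℝ (Fin 3))
    (p : Fin 3 → MvPolynomial (Fin 3) ℝ) : evalVL x p = polyVecEval p x := rfl

private noncomputable def koszulL :
    (Fin 3 → MvPolynomial (Fin 3) ℝ) →ₗ[ℝ] (Fin 3 → MvPolynomial (Fin 3) ℝ) :=
  LinearMap.pi fun i =>
    (LinearMap.mulLeft ℝ (X (i + 1)) ∘ₗ LinearMap.proj (i + 2))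
      - (LinearMap.mulLeft ℝ (X (i + 2)) ∘ₗ LinearMap.proj (i + 1))

private lemma koszulL_eq (z : Fin 3 → MvPolynomial (Fin 3) ℝ) : koszulL z = koszulCross z := by
  funext i
  have hi : i = 0 ∨ i = 1 ∨ i = 2 := by omega
  rcases hi with rfl | rfl | rfl <;>
    simp [koszulL, koszulCross, LinearMap.pi_apply, LinearMap.mulLeft_apply,
      show (0:Fin 3)+1 = 1 by decide, show (0:Fin 3)+2 = 2 by decide,
      show (1:Fin 3)+1 = 2 by decide, show (1:Fin 3)+2 = 0 by decide,
      show (2:Fin 3)+1 = 0 by decide, show (2:Fin 3)+2 = 1 by decide]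

private noncomputable def zVecL (ℓ : ℕ) :
    (Fin 3 → MvPolynomial (Fin 3) ℝ) →ₗ[ℝ] (Fin 3 → MvPolynomial (Fin 3) ℝ) :=
  LinearMap.pi fun i =>
    (∑ k ∈ Finset.range ℓ, (-(1/((k:ℝ)+2))) • (homogeneousComponent k : MvPolynomial (Fin 3) ℝ →ₗ[ℝ] MvPolynomial (Fin 3) ℝ)) ∘ₗ LinearMap.proj i

private lemma zVecL_eq (ℓ : ℕ) (v : Fin 3 → MvPolynomial (Fin 3) ℝ) : zVecL ℓ v = zVec ℓ v := by
  funext i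
  simp [zVecL, zVec, LinearMap.pi_apply, LinearMap.sum_apply, LinearMap.smul_apply]

private lemma continuous_evalMv (p : MvPolynomial (Fin 3) ℝ) :
    Continuous fun x : EuclideanSpace ℝ (Fin 3) => eval (fun j => x j) p := by
  induction p using MvPolynomial.induction_on with
  | C a => simpa using continuous_const
  | add p q hp hq =>
    simp only [eval_add]
    exact hp.add hq
  | mul_X p i hp =>
    simp only [eval_mul, eval_X]
    exact hp.mul (EuclideanSpace.proj (𝕜 := ℝ) i).continuous

private lemma continuous_polyVecEval (p : Fin 3 → MvPolynomial (Fin 3) ℝ) :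
    Continuous fun x => polyVecEval p x := by
  unfold polyVecEval
  exact (PiLp.continuous_toLp 2 (fun _ : Fin 3 => ℝ)).comp
    (continuous_pi fun i => continuous_evalMv (p i))

private lemma poly_eq_zero_of_vanish {r : ℝ} (hr : 0 < r) (p : MvPolynomial (Fin 3) ℝ)
    (h : ∀ x : EuclideanSpace ℝ (Fin 3), x ∈ Metric.ball 0 r → eval (fun j => x j) p = 0) :
    p = 0 := by
  apply MvPolynomial.funext
  intro y
  rw [map_zero]
  set Y : EuclideanSpace ℝ (Fin 3) := (WithLp.equiv 2 (Fin 3 → ℝ)).symm y with hY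
  set q : Polynomial ℝ := eval₂ Polynomial.C (fun j => Polynomial.C (y j) * Polynomial.X) p with hq
  have hqt : ∀ t : ℝ, Polynomial.eval t q = eval (fun j => y j * t) p := by
    intro t
    rw [hq, show (Polynomial.eval t : Polynomial ℝ → ℝ) = (Polynomial.evalRingHom t : Polynomial ℝ → ℝ) from rfl,
      eval₂_comp_left]
    have h1 : (Polynomial.evalRingHom t).comp Polynomial.C = RingHom.id ℝ := by
      ext r; simp
    have h2 : ((Polynomial.evalRingHom t : Polynomial ℝ →+* ℝ) ∘
        fun j => Polynomial.C (y j) * Polynomial.X) = fun j => y j * t := by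
      funext j; simp
    rw [h1, h2]
    rfl
  have hδ : 0 < r / (‖Y‖ + 1) := by positivity
  have hq0 : q = 0 := by
    apply Polynomial.eq_zero_of_infinite_isRoot
    have hsub : Set.Ioo (-(r / (‖Y‖ + 1))) (r / (‖Y‖ + 1)) ⊆ {x | q.IsRoot x} := by
      intro t ht
      obtain ⟨ht1, ht2⟩ := ht
      have habs : |t| < r / (‖Y‖ + 1) := abs_lt.mpr ⟨ht1, ht2⟩
      have hmem : t • Y ∈ Metric.ball (0 : EuclideanSpace ℝ (Fin 3)) r := by
        rw [mem_ball_zero_iff, norm_smul]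
        have h1 : ‖Y‖ < ‖Y‖ + 1 := by linarith
        calc ‖t‖ * ‖Y‖ ≤ |t| * (‖Y‖ + 1) := by
              rw [Real.norm_eq_abs]
              exact mul_le_mul_of_nonneg_left (by linarith) (abs_nonneg t)
          _ < (r / (‖Y‖ + 1)) * (‖Y‖ + 1) := by
              apply mul_lt_mul_of_pos_right habs (by positivity)
          _ = r := by field_simp
      have hz := h (t • Y) hmem
      show Polynomial.IsRoot q t
      have hfun : (fun j => y j * t) = fun j => (t • Y) j := by
        funext j
        rw [hY]
        simp [WithLp.equiv_symm_apply, mul_comm]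
      rw [Polynomial.IsRoot, hqt t, hfun, hz]
    exact (Set.infinite_coe_iff.mp (Set.Ioo.infinite (by linarith))).mono hsub
  have := hqt 1
  rw [hq0] at this
  simp only [Polynomial.eval_zero] at this
  have h1 : (fun j => y j * 1) = y := by funext j; simp
  rw [h1] at this
  exact this.symm

private noncomputable def TPmap (m : ℕ) :
    (Fin 3 → (restrictTotalDegree (Fin 3) ℝ m)) →ₗ[ℝ] (Fin 3 → MvPolynomial (Fin 3) ℝ) where
  toFun w i := (w i : MvPolynomial (Fin 3) ℝ)
  map_add' w w' := rfl
  map_smul' c w := rfl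

private lemma TPmap_injective (m : ℕ) : Function.Injective (TPmap m) := by
  intro w w' h
  funext i
  exact Subtype.ext (congrFun h i)

/-- Normalized form of the estimate `‖(curl)⁻¹‖ ≲ h_T` for the isomorphism
`curl : x × (P^{ℓ−1})³ → curl (P^ℓ)³` : for every measurable `T` with `B(0,ρ) ⊆ T ⊆ B(0,1)` and
every polynomial vector field `u` of component degree `≤ ℓ`, there is a polynomial vector field
`z` of component degree `≤ ℓ−1` with `curl (x ↦ x × z(x)) = curl u` as functions on `ℝ³` and
`∫_T ‖x × z(x)‖² ≤ C² ∫_T ‖curl u‖²`. -/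
theorem curl_inverse_bound (ℓ : ℕ) (hℓ : 1 ≤ ℓ) (ρ : ℝ) (hρ0 : 0 < ρ) (hρ1 : ρ < 1) :
    ∃ C : ℝ, 0 < C ∧
      ∀ T : Set (EuclideanSpace ℝ (Fin 3)), MeasurableSet T →
        Metric.ball 0 ρ ⊆ T → T ⊆ Metric.ball 0 1 →
        ∀ u : Fin 3 → MvPolynomial (Fin 3) ℝ, (∀ i, (u i).totalDegree ≤ ℓ) →
          ∃ z : Fin 3 → MvPolynomial (Fin 3) ℝ, (∀ i, (z i).totalDegree ≤ ℓ - 1) ∧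
            (∀ x : EuclideanSpace ℝ (Fin 3),
              polyVecEval (polyCurl (koszulCross z)) x = polyVecEval (polyCurl u) x) ∧
            (∫ x in T, ‖polyVecEval (koszulCross z) x‖ ^ 2) ≤
              C ^ 2 * ∫ x in T, ‖polyVecEval (polyCurl u) x‖ ^ 2 := by
  classical
  set m := ℓ - 1 with hmdef
  set n := Module.finrank ℝ (Fin 3 → (restrictTotalDegree (Fin 3) ℝ m)) with hndef
  let b : Module.Basis (Fin n) ℝ (Fin 3 → (restrictTotalDegree (Fin 3) ℝ m)) :=
    Module.finBasis ℝ _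
  let q : Fin n → (Fin 3 → MvPolynomial (Fin 3) ℝ) := fun i => TPmap m (b i)
  let AL : (Fin 3 → MvPolynomial (Fin 3) ℝ) →ₗ[ℝ] (Fin 3 → MvPolynomial (Fin 3) ℝ) :=
    koszulL ∘ₗ zVecL ℓ
  let vc : (Fin n → ℝ) → (Fin 3 → MvPolynomial (Fin 3) ℝ) := fun c => ∑ i, c i • q i
  -- continuity and integrability helpers
  have hcontsq : ∀ f : Fin 3 → MvPolynomial (Fin 3) ℝ,
      Continuous (fun x => ‖polyVecEval f x‖^2) := fun f =>
    ((continuous_polyVecEval f).norm).pow 2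
  have hib : ∀ (f : Fin 3 → MvPolynomial (Fin 3) ℝ) (s : Set (EuclideanSpace ℝ (Fin 3))),
      s ⊆ Metric.ball 0 1 → IntegrableOn (fun x => ‖polyVecEval f x‖^2) s volume :=
    fun f s hs =>
      (((hcontsq f).continuousOn).integrableOn_compact (isCompact_closedBall 0 1)).mono_set
        (hs.trans Metric.ball_subset_closedBall)
  have hibi : ∀ (f g : Fin 3 → MvPolynomial (Fin 3) ℝ) (s : Set (EuclideanSpace ℝ (Fin 3))),
      s ⊆ Metric.ball 0 1 →
      IntegrableOn (fun x => (inner ℝ (polyVecEval f x) (polyVecEval g x) : ℝ)) s volume :=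
    fun f g s hs =>
      ((((continuous_polyVecEval f).inner (continuous_polyVecEval g)).continuousOn).integrableOn_compact
        (isCompact_closedBall 0 1)).mono_set (hs.trans Metric.ball_subset_closedBall)
  -- quadratic representation
  have quad : ∀ (L : (Fin 3 → MvPolynomial (Fin 3) ℝ) →ₗ[ℝ] (Fin 3 → MvPolynomial (Fin 3) ℝ))
      (s : Set (EuclideanSpace ℝ (Fin 3))), s ⊆ Metric.ball 0 1 → ∀ c : Fin n → ℝ,
      (∫ x in s, ‖polyVecEval (L (vc c)) x‖^2) =
      ∑ i, ∑ j, (c i * c j) *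
        ∫ x in s, (inner ℝ (polyVecEval (L (q i)) x) (polyVecEval (L (q j)) x) : ℝ) := by
    intro L s hs c
    have hpt : ∀ x, (‖polyVecEval (L (vc c)) x‖^2)
        = ∑ i, ∑ j, (c i * c j) *
            (inner ℝ (polyVecEval (L (q i)) x) (polyVecEval (L (q j)) x) : ℝ) := by
      intro x
      have h1 : polyVecEval (L (vc c)) x = ∑ i, c i • polyVecEval (L (q i)) x := by
        have h2 := map_sum (evalVL x ∘ₗ L) (fun i => c i • q i) Finset.univ
        simp only [LinearMap.comp_apply, evalVL_apply, _root_.map_smul] at h2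
        exact h2
      rw [h1, ← real_inner_self_eq_norm_sq, sum_inner]
      refine Finset.sum_congr rfl fun i _ => ?_
      rw [inner_sum]
      refine Finset.sum_congr rfl fun j _ => ?_
      rw [real_inner_smul_left, real_inner_smul_right]
      ring
    simp only [hpt]
    rw [integral_finset_sum _ (fun i _ => integrable_finset_sum _ (fun j _ =>
      ((hibi (L (q i)) (L (q j)) s hs).const_mul _)))]
    refine Finset.sum_congr rfl fun i _ => ?_
    rw [integral_finset_sum _ (fun j _ => ((hibi (L (q i)) (L (q j)) s hs).const_mul _))]
    refine Finset.sum_congr rfl fun j _ => ?_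
    exact integral_const_mul _ _
  -- the two quadratic functionals
  let MF : Fin n → Fin n → ℝ := fun i j => ∫ x in Metric.ball 0 1,
    (inner ℝ (polyVecEval (AL (q i)) x) (polyVecEval (AL (q j)) x) : ℝ)
  let MG : Fin n → Fin n → ℝ := fun i j => ∫ x in Metric.ball 0 ρ,
    (inner ℝ (polyVecEval (q i) x) (polyVecEval (q j) x) : ℝ)
  let Ff : (Fin n → ℝ) → ℝ := fun c => ∑ i, ∑ j, (c i * c j) * MF i j
  let Gf : (Fin n → ℝ) → ℝ := fun c => ∑ i, ∑ j, (c i * c j) * MG i j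
  have hFf : ∀ c, (∫ x in Metric.ball 0 1, ‖polyVecEval (AL (vc c)) x‖^2) = Ff c :=
    fun c => quad AL _ subset_rfl c
  have hGf : ∀ c, (∫ x in Metric.ball 0 ρ, ‖polyVecEval (vc c) x‖^2) = Gf c := by
    intro c
    have h := quad LinearMap.id _ (Metric.ball_subset_ball hρ1.le) c
    simpa only [LinearMap.id_apply] using h
  have hcontFf : Continuous Ff :=
    continuous_finset_sum _ fun i _ => continuous_finset_sum _ fun j _ =>
      ((continuous_apply i).mul (continuous_apply j)).mul continuous_const
  have hcontGf : Continuous Gf :=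
    continuous_finset_sum _ fun i _ => continuous_finset_sum _ fun j _ =>
      ((continuous_apply i).mul (continuous_apply j)).mul continuous_const
  have hscale : ∀ (M : Fin n → Fin n → ℝ) (t : ℝ) (c : Fin n → ℝ),
      (∑ i, ∑ j, ((t • c) i * (t • c) j) * M i j)
        = t^2 * ∑ i, ∑ j, (c i * c j) * M i j := by
    intro M t c
    rw [Finset.mul_sum]
    refine Finset.sum_congr rfl fun i _ => ?_
    rw [Finset.mul_sum]
    refine Finset.sum_congr rfl fun j _ => ?_
    simp only [Pi.smul_apply, smul_eq_mul]
    ring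
  -- nontriviality
  have h1mem : (1 : MvPolynomial (Fin 3) ℝ) ∈ restrictTotalDegree (Fin 3) ℝ m :=
    (mem_restrictTotalDegree _ _ _).mpr (by simp [totalDegree_one])
  haveI : Nontrivial (Fin 3 → (restrictTotalDegree (Fin 3) ℝ m)) := by
    refine ⟨0, fun _ => ⟨1, h1mem⟩, fun h => ?_⟩
    have h0 := congrFun h 0
    rw [Subtype.ext_iff] at h0
    exact one_ne_zero h0.symm
  have hn : 0 < n := Module.finrank_pos
  haveI : Nonempty (Fin n) := ⟨⟨0, hn⟩⟩
  obtain ⟨c₀, hc₀⟩ : (Metric.sphere (0 : Fin n → ℝ) 1).Nonempty :=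
    NormedSpace.sphere_nonempty.mpr zero_le_one
  obtain ⟨cm, hcm_mem, hcm_min⟩ :=
    (isCompact_sphere (0 : Fin n → ℝ) 1).exists_isMinOn ⟨c₀, hc₀⟩ hcontGf.continuousOn
  obtain ⟨cM, hcM_mem, hcM_max⟩ :=
    (isCompact_sphere (0 : Fin n → ℝ) 1).exists_isMaxOn ⟨c₀, hc₀⟩ hcontFf.continuousOn
  -- positivity of Gf on the sphere
  have hGpos : ∀ c : Fin n → ℝ, ‖c‖ = 1 → 0 < Gf c := by
    intro c hc
    rw [← hGf c]
    have hcne : c ≠ 0 := by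
      intro h0
      rw [h0, norm_zero] at hc
      exact zero_ne_one hc
    have hvne : vc c ≠ 0 := by
      intro h0
      have hrepr : vc c = TPmap m (b.equivFun.symm c) := by
        rw [Module.Basis.equivFun_symm_apply, map_sum]
        refine Finset.sum_congr rfl fun i _ => ?_
        rw [_root_.map_smul]
      rw [hrepr] at h0
      have : b.equivFun.symm c = 0 := TPmap_injective m (by rw [h0, map_zero])
      exact hcne (b.equivFun.symm.injective (by rw [this, _root_.map_zero]))
    obtain ⟨i0, hi0⟩ : ∃ i0, vc c i0 ≠ 0 := by
      by_contra hall
      push_neg at hall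
      exact hvne (funext hall)
    have hx0 : ∃ x0 ∈ Metric.ball (0 : EuclideanSpace ℝ (Fin 3)) ρ,
        eval (fun j => x0 j) (vc c i0) ≠ 0 := by
      by_contra hK
      push_neg at hK
      exact hi0 (poly_eq_zero_of_vanish hρ0 _ (fun x hx => hK x hx))
    obtain ⟨x0, hx0mem, hx0ne⟩ := hx0
    refine (setIntegral_pos_iff_support_of_nonneg_ae
      (Filter.Eventually.of_forall fun x => by positivity)
      (hib (vc c) _ (Metric.ball_subset_ball hρ1.le))).mpr ?_
    have hvecne : polyVecEval (vc c) x0 ≠ 0 := by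
      intro h0
      apply hx0ne
      have hcoord : polyVecEval (vc c) x0 i0 = eval (fun j => x0 j) (vc c i0) := rfl
      rw [← hcoord, h0]
      rfl
    refine IsOpen.measure_pos volume
      (((hcontsq (vc c)).isOpen_support).inter Metric.isOpen_ball) ?_
    refine ⟨x0, ?_, hx0mem⟩
    simp only [Function.mem_support]
    exact pow_ne_zero 2 (norm_ne_zero_iff.mpr hvecne)
  have hm₀ : 0 < Gf cm := hGpos cm (by simpa using hcm_mem)
  set K := (max (Ff cM) 0 + 1) / Gf cm with hKdef
  have hmaxpos : (0:ℝ) < max (Ff cM) 0 + 1 := by positivity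
  have hK : 0 < K := div_pos hmaxpos hm₀
  -- the key finite-dimensional inequality
  have key : ∀ c : Fin n → ℝ, Ff c ≤ K * Gf c := by
    intro c
    rcases eq_or_ne c 0 with rfl | hcne
    · have hF0 : Ff 0 = 0 := by simp [Ff]
      have hG0 : Gf 0 = 0 := by simp [Gf]
      rw [hF0, hG0, mul_zero]
    · have ha : 0 < ‖c‖ := norm_pos_iff.mpr hcne
      set cu := ‖c‖⁻¹ • c with hcu
      have hcu1 : ‖cu‖ = 1 := by
        rw [hcu, norm_smul, norm_inv, norm_norm]
        field_simp
      have hsphere : cu ∈ Metric.sphere (0 : Fin n → ℝ) 1 := by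
        rwa [mem_sphere_zero_iff_norm]
      have hFle : Ff cu ≤ Ff cM := isMaxOn_iff.mp hcM_max cu hsphere
      have hGge : Gf cm ≤ Gf cu := isMinOn_iff.mp hcm_min cu hsphere
      have hcc : c = ‖c‖ • cu := (smul_inv_smul₀ (ne_of_gt ha) c).symm
      have hFc : Ff c = ‖c‖^2 * Ff cu := by
        conv_lhs => rw [hcc]
        exact hscale MF ‖c‖ cu
      have hGc : Gf c = ‖c‖^2 * Gf cu := by
        conv_lhs => rw [hcc]
        exact hscale MG ‖c‖ cu
      have hKm : K * Gf cm = max (Ff cM) 0 + 1 := by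
        rw [hKdef]
        field_simp
      calc Ff c = ‖c‖^2 * Ff cu := hFc
        _ ≤ ‖c‖^2 * (max (Ff cM) 0 + 1) := by
            refine mul_le_mul_of_nonneg_left ?_ (sq_nonneg _)
            calc Ff cu ≤ Ff cM := hFle
              _ ≤ max (Ff cM) 0 := le_max_left _ _
              _ ≤ max (Ff cM) 0 + 1 := by linarith
        _ = K * (‖c‖^2 * Gf cm) := by rw [← hKm]; ring
        _ ≤ K * Gf c := by
            refine mul_le_mul_of_nonneg_left ?_ hK.le
            rw [hGc]
            exact mul_le_mul_of_nonneg_left hGge (sq_nonneg _)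
  refine ⟨Real.sqrt K, Real.sqrt_pos.mpr hK, ?_⟩
  intro T hTm hballT hTball u hu
  set v := polyCurl u with hv
  set z := zVec ℓ v with hzdef
  have hdeg : ∀ i, (z i).totalDegree ≤ ℓ - 1 := fun i => zVec_totalDegree ℓ hℓ v i
  have hcurlz : polyCurl (koszulCross z) = polyCurl u := funext fun i => zVec_curl ℓ hℓ u hu i
  refine ⟨z, hdeg, fun x => by rw [hcurlz], ?_⟩
  have hvdeg : ∀ i, (v i).totalDegree ≤ m := fun i => polyCurl_totalDegree ℓ hℓ u hu i
  set w : Fin 3 → (restrictTotalDegree (Fin 3) ℝ m) :=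
    fun i => ⟨v i, (mem_restrictTotalDegree _ _ _).mpr (hvdeg i)⟩ with hwdef
  set c := b.equivFun w with hcdef
  have hvc : vc c = v := by
    have h1 : (∑ i, b.equivFun w i • b i) = w := Module.Basis.sum_equivFun b w
    calc vc c = TPmap m (∑ i, b.equivFun w i • b i) := by
          rw [map_sum]
          refine Finset.sum_congr rfl fun i _ => ?_
          rw [_root_.map_smul]
      _ = TPmap m w := by rw [h1]
      _ = v := funext fun i => rfl
  have hALv : koszulCross z = AL (vc c) := by
    rw [hvc]
    show koszulCross z = koszulL (zVecL ℓ v)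
    rw [koszulL_eq, zVecL_eq, hzdef]
  have hnonneg1 : 0 ≤ᶠ[ae (volume.restrict (Metric.ball (0 : EuclideanSpace ℝ (Fin 3)) 1))]
      (fun x => ‖polyVecEval (koszulCross z) x‖^2) :=
    Filter.Eventually.of_forall fun x => by positivity
  have hnonneg2 : 0 ≤ᶠ[ae (volume.restrict T)] (fun x => ‖polyVecEval v x‖^2) :=
    Filter.Eventually.of_forall fun x => by positivity
  calc (∫ x in T, ‖polyVecEval (koszulCross z) x‖^2)
      ≤ ∫ x in Metric.ball 0 1, ‖polyVecEval (koszulCross z) x‖^2 :=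
        setIntegral_mono_set (hib _ _ subset_rfl) hnonneg1 (HasSubset.Subset.eventuallyLE hTball)
    _ = Ff c := by rw [hALv]; exact hFf c
    _ ≤ K * Gf c := key c
    _ = K * ∫ x in Metric.ball 0 ρ, ‖polyVecEval v x‖^2 := by rw [← hGf c, hvc]
    _ ≤ K * ∫ x in T, ‖polyVecEval v x‖^2 := by
        refine mul_le_mul_of_nonneg_left
          (setIntegral_mono_set (hib v T hTball) hnonneg2
            (HasSubset.Subset.eventuallyLE hballT)) hK.le
    _ = (Real.sqrt K)^2 * ∫ x in T, ‖polyVecEval (polyCurl u) x‖^2 := by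
        rw [Real.sq_sqrt hK.le, hv]
end

section
/- Let n ≥ 1 and ℓ ≥ 1 be integers. (i) For every real polynomial r in n variables of total degree at most ℓ−1 there exists a unique real polynomial q in n variables of total degree at most ℓ−1 such that n·q(x) + Σ_{i=1}^{n} x_i ∂_i q(x) = r(x) for all x ∈ ℝⁿ (that is, the divergence of the vector field x ↦ q(x) x equals r). (ii) Moreover, for every real ρ with 0 < ρ < 1 there exists C > 0 depending only on n, ℓ and ρ such that, for every Lebesgue-measurable set T ⊆ ℝⁿ with B(0,ρ) ⊆ T ⊆ B(0,1), the polynomial q of (i) satisfies ∫_T ‖x‖² q(x)² dx ≤ C² ∫_T r(x)² dx. (This is the normalized form of the estimate ‖(div)⁻¹‖ ≲ h for the isomorphism div : x P^{ℓ−1} → P^{ℓ−1}.) -/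
open MvPolynomial MeasureTheory

namespace DivKoszul

variable {n : ℕ}

lemma degree_eq_sum_univ (s : Fin n →₀ ℕ) : s.degree = ∑ i, s i := by
  rw [Finsupp.degree]
  exact Finset.sum_subset (Finset.subset_univ _)
    (fun i _ hi => Finsupp.notMem_support_iff.mp hi)

lemma X_mul_pderiv_monomial (i : Fin n) (s : Fin n →₀ ℕ) (a : ℝ) :
    X i * pderiv i (monomial s a) = monomial s (a * s i) := by
  rw [pderiv_monomial]
  rcases Nat.eq_zero_or_pos (s i) with h | h
  · simp [h]
  · rw [X, monomial_mul, one_mul,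
      add_tsub_cancel_of_le (Finsupp.single_le_iff.mpr h)]

lemma sum_X_mul_pderiv (p : MvPolynomial (Fin n) ℝ) :
    ∑ i, X i * pderiv i p = ∑ s ∈ p.support, monomial s (coeff s p * (s.degree : ℝ)) := by
  calc ∑ i, X i * pderiv i p
      = ∑ i, X i * pderiv i (∑ s ∈ p.support, monomial s (coeff s p)) := by rw [← p.as_sum]
    _ = ∑ i, ∑ s ∈ p.support, X i * pderiv i (monomial s (coeff s p)) := by
        simp only [map_sum, Finset.mul_sum]
    _ = ∑ s ∈ p.support, ∑ i, X i * pderiv i (monomial s (coeff s p)) := Finset.sum_comm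
    _ = ∑ s ∈ p.support, monomial s (coeff s p * (s.degree : ℝ)) := by
        refine Finset.sum_congr rfl fun s _ => ?_
        simp_rw [X_mul_pderiv_monomial]
        rw [← map_sum (monomial s), ← Finset.mul_sum]
        congr 1
        rw [degree_eq_sum_univ]
        push_cast
        ring

lemma coeff_op (p : MvPolynomial (Fin n) ℝ) (α : Fin n →₀ ℕ) :
    coeff α ((n : ℝ) • p + ∑ i, X i * pderiv i p)
      = ((n : ℝ) + (α.degree : ℝ)) * coeff α p := by
  rw [coeff_add, coeff_smul, sum_X_mul_pderiv, coeff_sum]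
  by_cases hα : α ∈ p.support
  · rw [Finset.sum_eq_single α (fun s _ hs => by rw [coeff_monomial, if_neg hs])
      (fun h => absurd hα h)]
    rw [coeff_monomial, if_pos rfl]
    simp only [smul_eq_mul]
    ring
  · have h0 : coeff α p = 0 := by simpa using hα
    rw [h0]
    simp only [mul_zero, smul_zero, zero_add]
    refine Finset.sum_eq_zero fun s hs => ?_
    rw [coeff_monomial, if_neg]
    rintro rfl
    exact hα hs


lemma eval_op (p : MvPolynomial (Fin n) ℝ) (x : Fin n → ℝ) :
    eval x ((n : ℝ) • p + ∑ i, X i * pderiv i p)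
      = (n : ℝ) * eval x p + ∑ i, x i * eval x (pderiv i p) := by
  simp only [smul_eq_C_mul, map_add, map_sum, map_mul, eval_C, eval_X]

lemma denom_pos (hn : 1 ≤ n) (k : ℕ) : (0:ℝ) < (n : ℝ) + (k : ℝ) := by
  have : (1:ℝ) ≤ (n:ℝ) := by exact_mod_cast hn
  positivity

noncomputable def qsol (r : MvPolynomial (Fin n) ℝ) : MvPolynomial (Fin n) ℝ :=
  ∑ s ∈ r.support, monomial s (coeff s r / ((n : ℝ) + (s.degree : ℝ)))

lemma coeff_qsol (r : MvPolynomial (Fin n) ℝ) (α : Fin n →₀ ℕ) :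
    coeff α (qsol r) = coeff α r / ((n : ℝ) + (α.degree : ℝ)) := by
  rw [qsol, coeff_sum]
  by_cases hα : α ∈ r.support
  · rw [Finset.sum_eq_single α (fun s _ hs => by rw [coeff_monomial, if_neg hs])
      (fun h => absurd hα h), coeff_monomial, if_pos rfl]
  · have h0 : coeff α r = 0 := by simpa using hα
    rw [h0, zero_div]
    refine Finset.sum_eq_zero fun s hs => ?_
    rw [coeff_monomial, if_neg]
    rintro rfl
    exact hα hs

lemma support_qsol (r : MvPolynomial (Fin n) ℝ) : (qsol r).support ⊆ r.support := by
  intro α hα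
  rw [mem_support_iff] at hα ⊢
  intro h
  rw [coeff_qsol, h, zero_div] at hα
  exact hα rfl

lemma op_qsol (hn : 1 ≤ n) (r : MvPolynomial (Fin n) ℝ) :
    (n : ℝ) • qsol r + ∑ i, X i * pderiv i (qsol r) = r := by
  apply MvPolynomial.ext
  intro α
  rw [coeff_op, coeff_qsol, mul_div_cancel₀ _ (denom_pos hn α.degree).ne']

lemma eq_qsol (hn : 1 ≤ n) (r q : MvPolynomial (Fin n) ℝ)
    (h : ∀ x : Fin n → ℝ,
      (n : ℝ) * eval x q + ∑ i, x i * eval x (pderiv i q) = eval x r) :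
    q = qsol r := by
  have hpoly : (n : ℝ) • q + ∑ i, X i * pderiv i q = r :=
    MvPolynomial.funext fun x => by rw [eval_op]; exact h x
  apply MvPolynomial.ext
  intro α
  have := congrArg (coeff α) hpoly
  rw [coeff_op] at this
  rw [coeff_qsol, eq_div_iff (denom_pos hn α.degree).ne', mul_comm, this]

lemma part_one (hn : 1 ≤ n) (r : MvPolynomial (Fin n) ℝ) {d : ℕ} (hr : r.totalDegree ≤ d) :
    ∃! q : MvPolynomial (Fin n) ℝ, q.totalDegree ≤ d ∧
      ∀ x : Fin n → ℝ,
        (n : ℝ) * eval x q + ∑ i, x i * eval x (pderiv i q) = eval x r := by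
  refine ⟨qsol r, ⟨?_, ?_⟩, ?_⟩
  · exact le_trans (totalDegree_le_of_support_subset (support_qsol r)) hr
  · intro x
    rw [← eval_op, op_qsol hn]
  · intro q' hq'
    exact eq_qsol hn r q' hq'.2


section Coords

variable (n d : ℕ)

noncomputable def idx (f : Fin n → Fin (d+1)) : Fin n →₀ ℕ :=
  Finsupp.equivFunOnFinite.symm (fun i => (f i : ℕ))

variable {n d}

lemma idx_apply (f : Fin n → Fin (d+1)) (i : Fin n) : idx n d f i = f i := rfl

lemma idx_injective : Function.Injective (idx n d) := by
  intro f g h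
  funext i
  have := DFunLike.congr_fun h i
  rw [idx_apply, idx_apply] at this
  exact Fin.ext this

noncomputable def Emap (v : (Fin n → Fin (d+1)) → ℝ) : MvPolynomial (Fin n) ℝ :=
  ∑ f, monomial (idx n d f) (v f)

lemma coeff_idx_Emap (v : (Fin n → Fin (d+1)) → ℝ) (g : Fin n → Fin (d+1)) :
    coeff (idx n d g) (Emap v) = v g := by
  rw [Emap, coeff_sum,
    Finset.sum_eq_single g
      (fun f _ hf => by rw [coeff_monomial, if_neg (fun hc => hf (idx_injective hc))])
      (fun h => absurd (Finset.mem_univ g) h),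
    coeff_monomial, if_pos rfl]

lemma degree_eq_finsupp_sum (s : Fin n →₀ ℕ) : s.degree = s.sum fun _ e => e := rfl

lemma Emap_coeff {r : MvPolynomial (Fin n) ℝ} (hr : r.totalDegree ≤ d) :
    Emap (fun f => coeff (idx n d f) r) = r := by
  apply MvPolynomial.ext
  intro α
  by_cases hα : ∀ i, α i ≤ d
  · have hg : idx n d (fun i => (⟨α i, Nat.lt_succ_of_le (hα i)⟩ : Fin (d+1))) = α := by
      ext i
      rfl
    rw [← hg, coeff_idx_Emap]
  · push_neg at hα
    obtain ⟨i, hi⟩ := hα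
    have hro : coeff α r = 0 := by
      by_contra hc
      have h1 : (α.sum fun _ e => e) ≤ r.totalDegree :=
        le_totalDegree (mem_support_iff.mpr hc)
      have h2 := Finsupp.le_degree i α
      rw [degree_eq_finsupp_sum] at h2
      omega
    rw [hro, Emap, coeff_sum]
    refine Finset.sum_eq_zero fun f _ => ?_
    rw [coeff_monomial, if_neg]
    intro hc
    apply Nat.lt_irrefl d
    calc d < α i := hi
    _ = f i := by rw [← hc]; rfl
    _ ≤ d := Nat.lt_succ_iff.mp (f i).isLt

lemma eval_Emap (v : (Fin n → Fin (d+1)) → ℝ) (x : Fin n → ℝ) :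
    eval x (Emap v) = ∑ f, v f * ∏ i, x i ^ (f i : ℕ) := by
  rw [Emap, map_sum]
  refine Finset.sum_congr rfl fun f _ => ?_
  rw [eval_monomial, Finsupp.prod_pow]
  rfl

end Coords


section Analysis

variable {n d : ℕ}

local notation "H" => EuclideanSpace ℝ (Fin n)

lemma continuous_ev (p : MvPolynomial (Fin n) ℝ) :
    Continuous fun x : H => eval (fun j => x j) p :=
  p.continuous_eval.comp (PiLp.continuousLinearEquiv 2 ℝ (fun _ : Fin n => ℝ)).continuous

lemma integrableOn_of_subset {φ : H → ℝ} (hφ : Continuous φ) {T : Set H}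
    (hT : T ⊆ Metric.closedBall 0 1) : IntegrableOn φ T :=
  (hφ.continuousOn.integrableOn_compact (isCompact_closedBall _ _)).mono_set hT

lemma exists_eval_ne {ρ : ℝ} (hρ : 0 < ρ) {p : MvPolynomial (Fin n) ℝ} (hp : p ≠ 0) :
    ∃ x ∈ Metric.ball (0 : H) ρ, eval (fun j => x j) p ≠ 0 := by
  by_contra h
  push_neg at h
  apply hp
  have han : AnalyticOnNhd ℝ
      (fun x : H => eval ((PiLp.continuousLinearEquiv 2 ℝ (fun _ : Fin n => ℝ)
        : H →L[ℝ] (Fin n → ℝ)) x) p) Set.univ :=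
    AnalyticOnNhd.eval_continuousLinearMap _ p
  have hzero := han.eqOn_zero_of_preconnected_of_eventuallyEq_zero isPreconnected_univ
    (Set.mem_univ (0 : H))
    (Filter.eventually_of_mem (Metric.ball_mem_nhds _ hρ) (fun x hx => h x hx))
  refine MvPolynomial.funext (q := 0) fun y => ?_
  have := hzero (Set.mem_univ ((WithLp.equiv 2 (Fin n → ℝ)).symm y))
  simpa [PiLp.coe_continuousLinearEquiv] using this


noncomputable def F (n d : ℕ) (ρ : ℝ) (v : (Fin n → Fin (d+1)) → ℝ) : ℝ :=
  ∫ x in Metric.ball (0 : EuclideanSpace ℝ (Fin n)) ρ, (eval (fun j => x j) (Emap v)) ^ 2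

lemma ball_sub_cball {ρ : ℝ} (hρ : ρ ≤ 1) :
    Metric.ball (0 : H) ρ ⊆ Metric.closedBall (0 : H) 1 :=
  (Metric.ball_subset_ball hρ).trans Metric.ball_subset_closedBall

lemma F_eq (ρ : ℝ) (hρ : ρ ≤ 1) (v : (Fin n → Fin (d+1)) → ℝ) :
    F n d ρ v = ∑ f, ∑ g, v f * v g *
      ∫ x in Metric.ball (0 : H) ρ,
        (∏ i, x i ^ (f i : ℕ)) * (∏ i, x i ^ (g i : ℕ)) := by
  have hcont : ∀ f : Fin n → Fin (d+1),
      Continuous fun x : H => ∏ i, x i ^ (f i : ℕ) := by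
    intro f
    have := continuous_ev (n := n) (∏ i, (X i : MvPolynomial (Fin n) ℝ) ^ (f i : ℕ))
    simpa [eval_prod] using this
  have hint : ∀ f g : Fin n → Fin (d+1), IntegrableOn
      (fun x : H => v f * v g * ((∏ i, x i ^ (f i : ℕ)) * (∏ i, x i ^ (g i : ℕ))))
      (Metric.ball (0 : H) ρ) := by
    intro f g
    exact (integrableOn_of_subset (continuous_const.mul ((hcont f).mul (hcont g)))
      (ball_sub_cball hρ))
  calc F n d ρ v
      = ∫ x in Metric.ball (0 : H) ρ, ∑ f, ∑ g,
          v f * v g * ((∏ i, x i ^ (f i : ℕ)) * (∏ i, x i ^ (g i : ℕ))) := by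
        refine integral_congr_ae (Filter.Eventually.of_forall fun x => ?_)
        simp only [eval_Emap, sq, Finset.sum_mul_sum]
        exact Finset.sum_congr rfl fun f _ => Finset.sum_congr rfl fun g _ => by ring
    _ = ∑ f, ∫ x in Metric.ball (0 : H) ρ, ∑ g,
          v f * v g * ((∏ i, x i ^ (f i : ℕ)) * (∏ i, x i ^ (g i : ℕ))) :=
        integral_finset_sum _ (fun f _ => integrable_finset_sum _ fun g _ => hint f g)
    _ = ∑ f, ∑ g, ∫ x in Metric.ball (0 : H) ρ,
          v f * v g * ((∏ i, x i ^ (f i : ℕ)) * (∏ i, x i ^ (g i : ℕ))) :=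
        Finset.sum_congr rfl fun f _ => integral_finset_sum _ fun g _ => hint f g
    _ = ∑ f, ∑ g, v f * v g *
          ∫ x in Metric.ball (0 : H) ρ,
            (∏ i, x i ^ (f i : ℕ)) * (∏ i, x i ^ (g i : ℕ)) :=
        Finset.sum_congr rfl fun f _ => Finset.sum_congr rfl fun g _ =>
          integral_const_mul _ _

lemma continuous_F (ρ : ℝ) (hρ : ρ ≤ 1) : Continuous (F n d ρ) := by
  have : F n d ρ = fun v => ∑ f, ∑ g, v f * v g *
      ∫ x in Metric.ball (0 : H) ρ,
        (∏ i, x i ^ (f i : ℕ)) * (∏ i, x i ^ (g i : ℕ)) := funext (F_eq ρ hρ)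
  rw [this]
  exact continuous_finset_sum _ fun f _ => continuous_finset_sum _ fun g _ =>
    (((continuous_apply f).mul (continuous_apply g)).mul continuous_const)

lemma F_smul (ρ : ℝ) (t : ℝ) (v : (Fin n → Fin (d+1)) → ℝ) :
    F n d ρ (t • v) = t ^ 2 * F n d ρ v := by
  rw [F, F, ← integral_const_mul]
  refine integral_congr_ae (Filter.Eventually.of_forall fun x => ?_)
  simp only [eval_Emap, Pi.smul_apply, smul_eq_mul]
  have h : ∑ f, t * v f * ∏ i, x i ^ (f i : ℕ)
      = t * ∑ f, v f * ∏ i, x i ^ (f i : ℕ) := by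
    rw [Finset.mul_sum]
    exact Finset.sum_congr rfl fun f _ => by ring
  rw [h]
  ring

lemma F_nonneg (ρ : ℝ) (v : (Fin n → Fin (d+1)) → ℝ) : 0 ≤ F n d ρ v :=
  integral_nonneg fun x => sq_nonneg _

lemma F_pos (ρ : ℝ) (hρ : 0 < ρ) (hρ1 : ρ ≤ 1) {v : (Fin n → Fin (d+1)) → ℝ}
    (hv : v ≠ 0) : 0 < F n d ρ v := by
  have hp : Emap v ≠ 0 := by
    obtain ⟨g, hg⟩ := Function.ne_iff.mp hv
    intro h0
    apply hg
    rw [← coeff_idx_Emap v g, h0, coeff_zero]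
    rfl
  obtain ⟨x₀, hx₀b, hx₀⟩ := exists_eval_ne hρ hp
  rw [F, setIntegral_pos_iff_support_of_nonneg_ae
    (Filter.Eventually.of_forall fun x => sq_nonneg _)
    (integrableOn_of_subset ((continuous_ev _).pow 2) (ball_sub_cball hρ1))]
  have hsupp : Function.support (fun x : H => (eval (fun j => x j) (Emap v)) ^ 2)
      = {x : H | eval (fun j => x j) (Emap v) ≠ 0} := by
    ext x
    simp [Function.mem_support, pow_eq_zero_iff]
  rw [hsupp]
  have hopen : IsOpen ({x : H | eval (fun j => x j) (Emap v) ≠ 0}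
      ∩ Metric.ball (0 : H) ρ) :=
    ((isOpen_compl_singleton.preimage (continuous_ev _))).inter Metric.isOpen_ball
  exact hopen.measure_pos volume ⟨x₀, hx₀, hx₀b⟩


lemma exists_c (ρ : ℝ) (hρ : 0 < ρ) (hρ1 : ρ ≤ 1) :
    ∃ c : ℝ, 0 < c ∧ ∀ v : (Fin n → Fin (d+1)) → ℝ, c * ‖v‖ ^ 2 ≤ F n d ρ v := by
  haveI : Nonempty (Fin n → Fin (d+1)) := ⟨fun _ => 0⟩
  obtain ⟨v₀, hv₀S, hmin⟩ :=
    (isCompact_sphere (0 : (Fin n → Fin (d+1)) → ℝ) 1).exists_isMinOn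
      ((NormedSpace.sphere_nonempty (E := (Fin n → Fin (d+1)) → ℝ)).mpr zero_le_one)
      (continuous_F ρ hρ1).continuousOn
  have hv₀n : ‖v₀‖ = 1 := mem_sphere_zero_iff_norm.mp hv₀S
  have hv₀ : v₀ ≠ 0 := by
    intro h
    rw [h, norm_zero] at hv₀n
    norm_num at hv₀n
  refine ⟨F n d ρ v₀, F_pos ρ hρ hρ1 hv₀, fun v => ?_⟩
  rcases eq_or_ne v 0 with rfl | hv
  · simpa using F_nonneg ρ (0 : (Fin n → Fin (d+1)) → ℝ)
  · have hn0 : ‖v‖ ≠ 0 := norm_ne_zero_iff.mpr hv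
    have hmem : (‖v‖⁻¹ • v) ∈ Metric.sphere (0 : (Fin n → Fin (d+1)) → ℝ) 1 := by
      rw [mem_sphere_zero_iff_norm, norm_smul, norm_inv, norm_norm,
        inv_mul_cancel₀ hn0]
    have h1 : F n d ρ v₀ ≤ F n d ρ (‖v‖⁻¹ • v) := hmin hmem
    have h2 : F n d ρ v = ‖v‖ ^ 2 * F n d ρ (‖v‖⁻¹ • v) := by
      conv_lhs => rw [← smul_inv_smul₀ hn0 v]
      rw [F_smul]
    nlinarith [sq_nonneg ‖v‖]


lemma abs_coord_le (x : H) (j : Fin n) : |x j| ≤ ‖x‖ := by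
  rw [EuclideanSpace.norm_eq, ← Real.sqrt_sq_eq_abs]
  apply Real.sqrt_le_sqrt
  have h := Finset.single_le_sum (f := fun i => ‖x i‖ ^ 2)
    (fun i _ => sq_nonneg _) (Finset.mem_univ j)
  simpa [Real.norm_eq_abs, sq_abs] using h

lemma eval_le_sum_abs {p : MvPolynomial (Fin n) ℝ} (hp : p.totalDegree ≤ d)
    {x : H} (hx : ‖x‖ ≤ 1) :
    |eval (fun j => x j) p| ≤ ∑ f, |coeff (idx n d f) p| := by
  conv_lhs => rw [← Emap_coeff hp]
  rw [eval_Emap]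
  refine (Finset.abs_sum_le_sum_abs _ _).trans ?_
  refine Finset.sum_le_sum fun f _ => ?_
  rw [abs_mul]
  have h1 : |∏ i, x i ^ (f i : ℕ)| ≤ 1 := by
    rw [Finset.abs_prod]
    refine Finset.prod_le_one (fun i _ => abs_nonneg _) (fun i _ => ?_)
    rw [abs_pow]
    exact pow_le_one₀ (abs_nonneg _) ((abs_coord_le x i).trans hx)
  exact (mul_le_of_le_one_right (abs_nonneg _) h1)

end Analysis

end DivKoszul

open DivKoszul in
/-- (i) For every polynomial `r` in `n ≥ 1` variables of total degree `≤ ℓ−1`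
there is a unique polynomial `q` of total degree `≤ ℓ−1` such that the divergence of the vector
field `x ↦ q(x) x`, namely `n q(x) + Σᵢ xᵢ ∂ᵢq(x)`, equals `r(x)` for all `x ∈ ℝⁿ`.
(ii) For every `ρ ∈ (0,1)` there is `C > 0` depending only on `n`, `ℓ`, `ρ` such that for every
measurable `T` with `B(0,ρ) ⊆ T ⊆ B(0,1)` the polynomial `q` of (i) satisfies
`∫_T ‖x‖² q(x)² ≤ C² ∫_T r(x)²`. This is the normalized form of `‖(div)⁻¹‖ ≲ h` for the
isomorphism `div : x P^{ℓ−1} → P^{ℓ−1}`. -/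
theorem div_koszul_inverse (n ℓ : ℕ) (hn : 1 ≤ n) (hℓ : 1 ≤ ℓ) :
    (∀ r : MvPolynomial (Fin n) ℝ, r.totalDegree ≤ ℓ - 1 →
      ∃! q : MvPolynomial (Fin n) ℝ, q.totalDegree ≤ ℓ - 1 ∧
        ∀ x : Fin n → ℝ,
          (n : ℝ) * eval x q + ∑ i, x i * eval x (pderiv i q) = eval x r) ∧
    (∀ ρ : ℝ, 0 < ρ → ρ < 1 → ∃ C : ℝ, 0 < C ∧
      ∀ T : Set (EuclideanSpace ℝ (Fin n)), MeasurableSet T →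
        Metric.ball 0 ρ ⊆ T → T ⊆ Metric.ball 0 1 →
        ∀ r : MvPolynomial (Fin n) ℝ, r.totalDegree ≤ ℓ - 1 →
        ∀ q : MvPolynomial (Fin n) ℝ, q.totalDegree ≤ ℓ - 1 →
          (∀ x : Fin n → ℝ,
            (n : ℝ) * eval x q + ∑ i, x i * eval x (pderiv i q) = eval x r) →
          (∫ x in T, ‖x‖ ^ 2 * (eval (fun j => x j) q) ^ 2) ≤
            C ^ 2 * ∫ x in T, (eval (fun j => x j) r) ^ 2) := by
  constructor
  · intro r hr
    exact part_one hn r hr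
  · intro ρ hρ0 hρ1
    set d := ℓ - 1 with hd
    obtain ⟨c, hc, hcF⟩ := exists_c (n := n) (d := d) ρ hρ0 hρ1.le
    haveI : Nonempty (Fin n → Fin (d+1)) := ⟨fun _ => 0⟩
    set K : ℝ := (Fintype.card (Fin n → Fin (d+1)) : ℝ) with hKdef
    have hK : 0 < K := by
      rw [hKdef]
      exact_mod_cast Fintype.card_pos (α := Fin n → Fin (d+1))
    set vol1 : ℝ := (volume (Metric.ball (0 : EuclideanSpace ℝ (Fin n)) 1)).toReal
      with hvol1def
    have hvol1 : 0 ≤ vol1 := ENNReal.toReal_nonneg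
    refine ⟨Real.sqrt (vol1 * K ^ 2 / c + 1), Real.sqrt_pos.mpr (by positivity), ?_⟩
    intro T hTmeas hT1 hT2 r hr q hq hdiv
    have hC2 : (Real.sqrt (vol1 * K ^ 2 / c + 1)) ^ 2 = vol1 * K ^ 2 / c + 1 :=
      Real.sq_sqrt (by positivity)
    have hpoly : (n : ℝ) • q + ∑ i, X i * pderiv i q = r :=
      MvPolynomial.funext fun x => by rw [eval_op]; exact hdiv x
    have hco : ∀ α : Fin n →₀ ℕ, ((n : ℝ) + α.degree) * coeff α q = coeff α r := by
      intro α
      have := congrArg (MvPolynomial.coeff α) hpoly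
      rwa [coeff_op] at this
    have habs : ∀ α : Fin n →₀ ℕ, |coeff α q| ≤ |coeff α r| := by
      intro α
      rw [← hco α, abs_mul]
      have h1 : (1 : ℝ) ≤ |(n : ℝ) + α.degree| := by
        rw [abs_of_pos (denom_pos hn _)]
        have : (1 : ℝ) ≤ (n : ℝ) := by exact_mod_cast hn
        have : (0 : ℝ) ≤ (α.degree : ℝ) := by positivity
        linarith
      nlinarith [abs_nonneg (coeff α q)]
    set Nq : ℝ := ∑ f, |coeff (idx n d f) q| with hNqdef
    set Nr : ℝ := ∑ f, |coeff (idx n d f) r| with hNrdef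
    have hNq0 : 0 ≤ Nq := Finset.sum_nonneg fun f _ => abs_nonneg _
    have hNr0 : 0 ≤ Nr := Finset.sum_nonneg fun f _ => abs_nonneg _
    have hNqr : Nq ≤ Nr := Finset.sum_le_sum fun f _ => habs _
    have hTc : T ⊆ Metric.closedBall (0 : EuclideanSpace ℝ (Fin n)) 1 :=
      hT2.trans Metric.ball_subset_closedBall
    have hμT : volume T < ⊤ :=
      lt_of_le_of_lt (measure_mono hTc) (measure_closedBall_lt_top)
    -- LHS bound
    have hxT : ∀ x ∈ T, ‖x‖ ≤ 1 := fun x hx =>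
      le_of_lt (mem_ball_zero_iff.mp (hT2 hx))
    have step1 : (∫ x in T, ‖x‖ ^ 2 * (eval (fun j => x j) q) ^ 2)
        ≤ ∫ x in T, (eval (fun j => x j) q) ^ 2 := by
      refine setIntegral_mono_on ?_ ?_ hTmeas ?_
      · exact integrableOn_of_subset
          ((continuous_norm.pow 2).mul ((continuous_ev q).pow 2)) hTc
      · exact integrableOn_of_subset ((continuous_ev q).pow 2) hTc
      · intro x hx
        have h1 := hxT x hx
        have h2 : (0:ℝ) ≤ ‖x‖ := norm_nonneg _
        have h3 : ‖x‖ ^ 2 ≤ 1 := by nlinarith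
        nlinarith [sq_nonneg (eval (fun j => x j) q), h3]
    have step2 : (∫ x in T, (eval (fun j => x j) q) ^ 2)
        ≤ (volume T).toReal * Nq ^ 2 := by
      have := norm_setIntegral_le_of_norm_le_const (μ := volume) (s := T)
        (f := fun x : EuclideanSpace ℝ (Fin n) => (eval (fun j => x j) q) ^ 2)
        (C := Nq ^ 2) hμT ?_
      · calc (∫ x in T, (eval (fun j => x j) q) ^ 2)
            ≤ ‖∫ x in T, (eval (fun j => x j) q) ^ 2‖ := le_abs_self _
          _ ≤ Nq ^ 2 * (volume T).toReal := this
          _ = (volume T).toReal * Nq ^ 2 := mul_comm _ _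
      · intro x hx
        have hb : |eval (fun j => x j) q| ≤ Nq :=
          eval_le_sum_abs hq (hxT x hx)
        have : ‖(eval (fun j => x j) q) ^ 2‖ = |eval (fun j => x j) q| ^ 2 := by
          rw [Real.norm_eq_abs, abs_pow, sq_abs, ← sq_abs]
        rw [this]
        exact pow_le_pow_left₀ (abs_nonneg _) hb 2
    have step3 : (volume T).toReal ≤ vol1 :=
      ENNReal.toReal_mono measure_ball_lt_top.ne (measure_mono hT2)
    set v : (Fin n → Fin (d+1)) → ℝ := fun f => coeff (idx n d f) r with hvdef
    have hEv : Emap v = r := Emap_coeff hr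
    have hNrK : Nr ≤ K * ‖v‖ := by
      have hb : ∀ f ∈ Finset.univ, |coeff (idx n d f) r| ≤ ‖v‖ := fun f _ => by
        have h := norm_le_pi_norm v f
        rwa [Real.norm_eq_abs] at h
      calc Nr ≤ Finset.univ.card • ‖v‖ := Finset.sum_le_card_nsmul _ _ _ hb
        _ = K * ‖v‖ := by rw [nsmul_eq_mul, Finset.card_univ, hKdef]
    have hFv : c * ‖v‖ ^ 2 ≤ ∫ x in T, (eval (fun j => x j) r) ^ 2 := by
      refine (hcF v).trans ?_
      calc F n d ρ v
          = ∫ x in Metric.ball (0 : EuclideanSpace ℝ (Fin n)) ρ,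
              (eval (fun j => x j) r) ^ 2 := by rw [F, hEv]
        _ ≤ ∫ x in T, (eval (fun j => x j) r) ^ 2 :=
            setIntegral_mono_set
              (integrableOn_of_subset ((continuous_ev r).pow 2) hTc)
              (Filter.Eventually.of_forall fun x => sq_nonneg _)
              (HasSubset.Subset.eventuallyLE hT1)
    have hIpos : 0 ≤ ∫ x in T, (eval (fun j => x j) r) ^ 2 :=
      setIntegral_nonneg hTmeas fun x _ => sq_nonneg _
    calc (∫ x in T, ‖x‖ ^ 2 * (eval (fun j => x j) q) ^ 2)
        ≤ ∫ x in T, (eval (fun j => x j) q) ^ 2 := step1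
      _ ≤ (volume T).toReal * Nq ^ 2 := step2
      _ ≤ vol1 * Nq ^ 2 := mul_le_mul_of_nonneg_right step3 (by positivity)
      _ ≤ vol1 * Nr ^ 2 :=
          mul_le_mul_of_nonneg_left (pow_le_pow_left₀ hNq0 hNqr 2) hvol1
      _ ≤ vol1 * (K * ‖v‖) ^ 2 :=
          mul_le_mul_of_nonneg_left (pow_le_pow_left₀ hNr0 hNrK 2) hvol1
      _ = (vol1 * K ^ 2 / c) * (c * ‖v‖ ^ 2) := by field_simp
      _ ≤ (vol1 * K ^ 2 / c) * ∫ x in T, (eval (fun j => x j) r) ^ 2 :=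
          mul_le_mul_of_nonneg_left hFv (by positivity)
      _ ≤ (vol1 * K ^ 2 / c + 1) * ∫ x in T, (eval (fun j => x j) r) ^ 2 := by
          nlinarith [hIpos]
      _ = (Real.sqrt (vol1 * K ^ 2 / c + 1)) ^ 2
            * ∫ x in T, (eval (fun j => x j) r) ^ 2 := by rw [hC2]
end
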